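/- arXiv:0904.1853 — 2 statements merged into one kernel-verified Lean document; each statement's English description precedes it below -/
import Mathlib

section
/- Let Λ = ℤ[t,t⁻¹] and M a finitely generated Λ-module. Every finite Λ-submodule N of M is contained in DM. -/
open LaurentPolynomial

local notation "Λ" => LaurentPolynomial ℤ

/-- A nonzero polynomial whose natDegree equals its natTrailingDegree is a
monomial. -/
lemma eq_C_mul_X_pow_of_deg_eq {p : Polynomial ℤ} (hp : p ≠ 0)
    (h : p.natDegree = p.natTrailingDegree) :
    p = Polynomial.C p.leadingCoeff * Polynomial.X ^ p.natDegree := by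
  ext i
  rw [Polynomial.coeff_C_mul, Polynomial.coeff_X_pow]
  rcases eq_or_ne i p.natDegree with rfl | hi
  · rw [if_pos rfl, mul_one]; rfl
  · rcases lt_or_gt_of_ne hi with hlt | hgt
    · rw [if_neg hi, mul_zero, Polynomial.coeff_eq_zero_of_lt_natTrailingDegree (h ▸ hlt)]
    · rw [if_neg hi, mul_zero, Polynomial.coeff_eq_zero_of_natDegree_lt hgt]

/-- Key arithmetic lemma: a common divisor in `ℤ[t,t⁻¹]` of a nonzero integer
constant and of `T n - 1` (with `n ≥ 1`) is a unit. -/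
lemma key_isUnit (m : ℤ) (hm : m ≠ 0) (n : ℕ) (hn : n ≠ 0) (d : Λ)
    (h1 : d ∣ (m : Λ)) (h2 : d ∣ (T (n : ℤ) - 1)) : IsUnit d := by
  obtain ⟨e1, he1⟩ := h1
  obtain ⟨e2, he2⟩ := h2
  obtain ⟨a, d', hd⟩ := d.exists_T_pow
  obtain ⟨b, e1', hb⟩ := e1.exists_T_pow
  obtain ⟨c, e2', hc⟩ := e2.exists_T_pow
  -- First equation: d' * e1' = m * X ^ (a + b)
  have eq1 : d' * e1' = (m : Polynomial ℤ) * Polynomial.X ^ (a + b) := by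
    apply Polynomial.toLaurent_injective
    rw [map_mul, hd, hb, map_mul, map_intCast, Polynomial.toLaurent_X_pow]
    rw [mul_mul_mul_comm, ← T_add, ← he1]
    push_cast
    ring
  -- Second equation: d' * e2' = (X ^ n - 1) * X ^ (a + c)
  have eq2 : d' * e2' = (Polynomial.X ^ n - 1) * Polynomial.X ^ (a + c) := by
    apply Polynomial.toLaurent_injective
    rw [map_mul, hd, hc, map_mul, map_sub, map_one, Polynomial.toLaurent_X_pow,
      Polynomial.toLaurent_X_pow]
    rw [mul_mul_mul_comm, ← T_add, ← he2]
    push_cast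
    ring
  -- Nonvanishing
  have hd0 : d' ≠ 0 := by
    intro h
    apply hm
    have : (m : Polynomial ℤ) * Polynomial.X ^ (a + b) = 0 := by rw [← eq1, h, zero_mul]
    rcases mul_eq_zero.mp this with h' | h'
    · exact_mod_cast h'
    · exact absurd h' (pow_ne_zero _ Polynomial.X_ne_zero)
  have he10 : e1' ≠ 0 := by
    intro h
    apply hm
    have : (m : Polynomial ℤ) * Polynomial.X ^ (a + b) = 0 := by rw [← eq1, h, mul_zero]
    rcases mul_eq_zero.mp this with h' | h'
    · exact_mod_cast h'
    · exact absurd h' (pow_ne_zero _ Polynomial.X_ne_zero)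
  -- The leading coefficient of d' is a unit, from eq2 (monic RHS)
  have hmonic : ((Polynomial.X ^ n - 1 : Polynomial ℤ) * Polynomial.X ^ (a + c)).Monic := by
    have h1 : (Polynomial.X ^ n - 1 : Polynomial ℤ).Monic := by
      simpa using Polynomial.monic_X_pow_sub_C (1 : ℤ) hn
    exact h1.mul (Polynomial.monic_X_pow _)
  have hlc : d'.leadingCoeff * e2'.leadingCoeff = 1 := by
    rw [← Polynomial.leadingCoeff_mul, eq2, hmonic]
  have hunit : IsUnit d'.leadingCoeff := IsUnit.of_mul_eq_one _ hlc
  -- degrees from eq1: d' is a monomial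
  have hCm : (m : Polynomial ℤ) = Polynomial.C m := by simp
  have hdeg : d'.natDegree + e1'.natDegree = a + b := by
    have := congrArg Polynomial.natDegree eq1
    rwa [Polynomial.natDegree_mul hd0 he10, hCm,
      Polynomial.natDegree_C_mul_X_pow _ _ hm] at this
  have htdeg : d'.natTrailingDegree + e1'.natTrailingDegree = a + b := by
    have := congrArg Polynomial.natTrailingDegree eq1
    rwa [Polynomial.natTrailingDegree_mul hd0 he10, hCm,
      Polynomial.natTrailingDegree_mul (Int.cast_ne_zero.mpr hm) (pow_ne_zero _ Polynomial.X_ne_zero),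
      Polynomial.natTrailingDegree_C, Polynomial.natTrailingDegree_X_pow,
      zero_add] at this
  have hle1 := d'.natTrailingDegree_le_natDegree
  have hle2 := e1'.natTrailingDegree_le_natDegree
  have heq : d'.natDegree = d'.natTrailingDegree := by omega
  -- so d' = C u * X ^ k with u a unit
  have hform := eq_C_mul_X_pow_of_deg_eq hd0 heq
  -- conclude
  have hdT : Polynomial.toLaurent d' = d * T (a : ℤ) := hd
  have : IsUnit (Polynomial.toLaurent d') := by
    rw [hform, map_mul, Polynomial.toLaurent_C, Polynomial.toLaurent_X_pow]
    exact (hunit.map LaurentPolynomial.C).mul (isUnit_T _)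
  rw [hdT] at this
  exact isUnit_of_mul_isUnit_left this

/-- Every finite `Λ`-submodule `N` of a finitely generated
`Λ = ℤ[t,t⁻¹]`-module `M` is contained in the set `DM`. -/
theorem finite_submodule_subset_DM (M : Type*) [AddCommGroup M] [Module Λ M]
    [Module.Finite Λ M] (N : Submodule Λ M) (hN : Set.Finite (N : Set M)) :
    (N : Set M) ⊆ { x : M | ∃ (s : ℕ) (f : Fin s → Λ), 2 ≤ s ∧
      (∀ d : Λ, (∀ i, d ∣ f i) → IsUnit d) ∧ ∀ i, f i • x = 0 } := by
  intro x hx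
  have : Finite (N : Set M) := hN.to_subtype
  -- find a nonzero integer annihilating x
  obtain ⟨a, b, hab, habe⟩ := Finite.exists_ne_map_eq_of_infinite
    (fun n : ℤ => (⟨n • x, N.toAddSubgroup.zsmul_mem hx n⟩ : (N : Set M)))
  have habe' : a • x = b • x := congrArg Subtype.val habe
  set m : ℤ := a - b with hm_def
  have hm : m ≠ 0 := sub_ne_zero.mpr hab
  have hmx : (m : Λ) • x = 0 := by
    rw [Int.cast_smul_eq_zsmul, hm_def, sub_smul, habe', sub_self]
  -- find n ≥ 1 with (T n - 1) • x = 0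
  have key2 : ∀ u v : ℤ, (T u : Λ) • x = (T v : Λ) • x → (T (u - v) : Λ) • x = x := by
    intro u v h
    have h1 : (T (u - v) : Λ) • x = (T (-v) : Λ) • ((T u : Λ) • x) := by
      rw [smul_smul, ← T_add]
      congr 1
      ring
    rw [h1, h, smul_smul, ← T_add, neg_add_cancel, T_zero, one_smul]
  obtain ⟨p, q, hpq, hpqe⟩ := Finite.exists_ne_map_eq_of_infinite
    (fun n : ℤ => (⟨(T n : Λ) • x, N.smul_mem (T n) hx⟩ : (N : Set M)))
  have hpqe' : (T p : Λ) • x = (T q : Λ) • x := congrArg Subtype.val hpqe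
  obtain ⟨j, hj, hjx⟩ : ∃ j : ℤ, 0 < j ∧ (T j : Λ) • x = x := by
    rcases lt_or_gt_of_ne hpq with h | h
    · exact ⟨q - p, by omega, key2 q p hpqe'.symm⟩
    · exact ⟨p - q, by omega, key2 p q hpqe'⟩
  set n : ℕ := j.toNat with hn_def
  have hn : n ≠ 0 := by omega
  have hnx : ((T (n : ℤ) : Λ) - 1) • x = 0 := by
    rw [sub_smul, one_smul, sub_eq_zero, hn_def, Int.toNat_of_nonneg hj.le, hjx]
  refine ⟨2, ![(m : Λ), T (n : ℤ) - 1], le_refl 2, ?_, ?_⟩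
  · intro d hd
    exact key_isUnit m hm n hn d (by simpa using hd 0) (by simpa using hd 1)
  · intro i
    fin_cases i
    · simpa using hmx
    · simpa using hnx
end

section
/- Let Λ = ℤ[t,t⁻¹]. If D is a finite Λ-module which is nearly symmetric (there is a Λ-exact sequence 0 → D₁ → D → D* → D₀ → 0 with (t-1)D₀ = (t-1)D₁ = 0 and D* finite symmetric), then in the canonical splitting D = D_{t-1} ⊕ D_c, the summand D_c is symmetric, i.e. t-anti isomorphic to Hom_ℤ(D_c, ℚ/ℤ). -/
open LaurentPolynomial

local notation "Λ" => LaurentPolynomial ℤ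

/-- Let `D` be a finite `Λ = ℤ[t,t⁻¹]`-module which is nearly symmetric:
there is a `Λ`-linear map `f : D → D*` to a finite symmetric `Λ`-module `D*` whose
kernel `D₁` and cokernel `D₀` are annihilated by `t-1` (encoding the `Λ`-exact sequence
`0 → D₁ → D → D* → D₀ → 0`).  Then in the canonical splitting `D = D_{t-1} ⊕ D_c`
(with `t-1` bijective on `D_c`), the summand `D_c` is symmetric, i.e. `t`-anti
isomorphic to `Hom_ℤ(D_c, ℚ/ℤ)`. -/
theorem nearly_symmetric_Dc_symmetric (D : Type) [AddCommGroup D] [Module Λ D]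
    [Finite D]
    (Dstar : Type) [AddCommGroup Dstar] [Module Λ Dstar] [Finite Dstar]
    (f : D →ₗ[Λ] Dstar)
    (hker : ∀ x ∈ LinearMap.ker f, (T 1 - 1 : Λ) • x = 0)
    (hcoker : ∀ y : Dstar, (T 1 - 1 : Λ) • y ∈ LinearMap.range f)
    (hsym : ∃ φ : Dstar ≃+ (Dstar →+ AddCircle (1 : ℚ)),
      ∀ x y, φ ((T 1 : Λ) • x) y = φ x ((T (-1) : Λ) • y)) :
    ∀ Dc : Submodule Λ D,
      IsCompl (⨆ k : ℕ, Submodule.torsionBy Λ D ((T 1 - 1 : Λ) ^ k)) Dc →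
      Function.Bijective (fun x : Dc => (T 1 - 1 : Λ) • x) →
      ∃ φ : Dc ≃+ (Dc →+ AddCircle (1 : ℚ)),
        ∀ x y : Dc, φ ((T 1 : Λ) • x) y = φ x ((T (-1) : Λ) • y) := by
  intro Dc hcompl hbij
  obtain ⟨φ, hφ⟩ := hsym
  set s : Λ := T 1 - 1 with hs
  set s' : Λ := (T (-1) : Λ) - 1 with hs'
  set P := ⨆ k : ℕ, Submodule.torsionBy Λ D (s ^ k) with hPdef
  -- basic Laurent polynomial identities
  have hTT : (T 1 : Λ) * T (-1) = 1 := by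
    rw [← T_add, show (1 : ℤ) + -1 = 0 by ring, T_zero]
  have hTT' : (T (-1) : Λ) * T 1 = 1 := by
    rw [← T_add, show (-1 : ℤ) + 1 = 0 by ring, T_zero]
  have hss' : s' = (-(T (-1) : Λ)) * s := by
    rw [hs, hs', mul_sub, mul_one, neg_mul, hTT']; ring
  have hkill : ∀ (k : ℕ) (τ : Dstar), s ^ k • τ = 0 → s' ^ k • τ = 0 := by
    intro k τ h
    rw [hss', mul_pow, mul_smul, h, smul_zero]
  -- anti-equivariance identities for φ
  have hφ' : ∀ x y, φ ((T (-1) : Λ) • x) y = φ x ((T 1 : Λ) • y) := by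
    intro x y
    have h2 := hφ ((T (-1) : Λ) • x) ((T 1 : Λ) • y)
    simp only [smul_smul, hTT, hTT', one_smul] at h2
    exact h2.symm
  have hφs : ∀ x y, φ (s • x) y = φ x (s' • y) := by
    intro x y
    simp only [hs, hs', sub_smul, one_smul, map_sub, AddMonoidHom.sub_apply, hφ]
  have hφs' : ∀ x y, φ (s' • x) y = φ x (s • y) := by
    intro x y
    simp only [hs, hs', sub_smul, one_smul, map_sub, AddMonoidHom.sub_apply, hφ']
  have hφsk : ∀ (k : ℕ) (x y), φ (s ^ k • x) y = φ x (s' ^ k • y) := by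
    intro k
    induction k with
    | zero => intro x y; simp
    | succ n ih =>
      intro x y
      rw [pow_succ, mul_smul, ih, hφs, smul_smul, ← pow_succ']
  have hφs'k : ∀ (k : ℕ) (x y), φ (s' ^ k • x) y = φ x (s ^ k • y) := by
    intro k
    induction k with
    | zero => intro x y; simp
    | succ n ih =>
      intro x y
      rw [pow_succ, mul_smul, ih, hφs', smul_smul, ← pow_succ']
  -- membership in the (t-1)-primary part
  have hmono : Monotone (fun k : ℕ => Submodule.torsionBy Λ D (s ^ k)) := by
    intro a b hab x hx
    rw [Submodule.mem_torsionBy_iff] at *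
    obtain ⟨c, rfl⟩ := Nat.exists_eq_add_of_le hab
    rw [add_comm a c, pow_add, mul_smul, hx, smul_zero]
  have hPmem : ∀ x : D, x ∈ P ↔ ∃ k, s ^ k • x = 0 := by
    intro x
    rw [hPdef, Submodule.mem_iSup_of_directed _ hmono.directed_le]
    simp [Submodule.mem_torsionBy_iff]
  have hdecD : ∀ x : D, ∃ p ∈ P, ∃ c ∈ Dc, p + c = x := by
    intro x
    have hx : x ∈ P ⊔ Dc := by rw [hcompl.sup_eq_top]; trivial
    exact Submodule.mem_sup.mp hx
  have hfinj : ∀ x : D, x ∈ Dc → f x = 0 → x = 0 := by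
    intro x hx hfx
    have h1 : s • x = 0 := hker x (LinearMap.mem_ker.mpr hfx)
    have h2 : x ∈ P := (hPmem x).mpr ⟨1, by rwa [pow_one]⟩
    exact Submodule.disjoint_def.mp hcompl.disjoint x h2 hx
  have hsurjpow : ∀ (k : ℕ) (y : Dc), ∃ x : Dc, s ^ k • x = y := by
    intro k
    induction k with
    | zero => exact fun y => ⟨y, by simp⟩
    | succ n ih =>
      intro y
      obtain ⟨z, hz⟩ := hbij.2 y
      obtain ⟨x, hx⟩ := ih z
      refine ⟨x, ?_⟩
      rw [pow_succ', mul_smul, hx]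
      simpa using hz
  -- stabilization of powers of s on Dstar
  have stab : ∃ a r : ℕ, 0 < r ∧ ∀ w : Dstar, s ^ a • w = s ^ (a + r) • w := by
    obtain ⟨a, b, hab, he⟩ :=
      Finite.exists_ne_map_eq_of_infinite (fun n : ℕ => (fun w : Dstar => s ^ n • w))
    rcases hab.lt_or_gt with h | h
    · refine ⟨a, b - a, by omega, fun w => ?_⟩
      rw [Nat.add_sub_cancel' h.le]
      exact congrFun he w
    · refine ⟨b, a - b, by omega, fun w => ?_⟩
      rw [Nat.add_sub_cancel' h.le]
      exact (congrFun he w).symm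
  obtain ⟨a, r, hr, hstab⟩ := stab
  have hstab2 : ∀ (n : ℕ) (w : Dstar), s ^ (a + n) • w = s ^ (a + n + r) • w := by
    intro n w
    have h1 : s ^ (a + n) • w = s ^ n • s ^ a • w := by
      rw [← mul_smul, ← pow_add, add_comm n a]
    rw [h1, hstab w, ← mul_smul, ← pow_add]
    have : n + (a + r) = a + n + r := by omega
    rw [this]
  have hstab3 : ∀ (k : ℕ) (w : Dstar), s ^ a • w = s ^ (a + k * r) • w := by
    intro k
    induction k with
    | zero => simp
    | succ n ih =>
      intro w
      have hexp : a + (n + 1) * r = a + n * r + r := by ring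
      rw [ih w, hexp]
      exact hstab2 (n * r) w
  -- Fitting-style decomposition of Dstar
  have hdec : ∀ w : Dstar, ∃ c ∈ Dc, ∃ k : ℕ, s ^ k • (w - f c) = 0 := by
    intro w
    obtain ⟨m, hm⟩ : ∃ m : ℕ, (a + 1) * r = m + 1 := by
      have h : 1 ≤ (a + 1) * r := Nat.one_le_iff_ne_zero.mpr (by positivity)
      exact ⟨(a + 1) * r - 1, by omega⟩
    have h1 : s ^ a • (w - s ^ ((a + 1) * r) • w) = 0 := by
      rw [smul_sub, ← mul_smul, ← pow_add, ← hstab3 (a + 1) w, sub_self]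
    obtain ⟨d, hd⟩ := hcoker w
    obtain ⟨p, hp, c, hc, hpc⟩ := hdecD (s ^ m • d)
    obtain ⟨kp, hkp⟩ := (hPmem p).mp hp
    have hfj : s ^ ((a + 1) * r) • w = f p + f c := by
      rw [hm, pow_succ, mul_smul, ← hd, ← map_smul, ← hpc, map_add]
    refine ⟨c, hc, a + kp, ?_⟩
    have hsplit : w - f c = (w - s ^ ((a + 1) * r) • w) + f p := by
      rw [hfj]; abel
    have e1 : s ^ (a + kp) • (w - s ^ ((a + 1) * r) • w) = 0 := by
      rw [add_comm a kp, pow_add, mul_smul, h1, smul_zero]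
    have e2 : s ^ (a + kp) • f p = 0 := by
      rw [pow_add, mul_smul, ← map_smul, hkp, map_zero, smul_zero]
    rw [hsplit, smul_add, e1, e2, add_zero]
  -- the pairing on Dc
  let F : Dc →+ Dstar := (f.comp Dc.subtype).toAddMonoidHom
  have hF : ∀ x : Dc, F x = f ↑x := fun _ => rfl
  let ψ : Dc →+ (Dc →+ AddCircle (1 : ℚ)) := AddMonoidHom.mk'
    (fun x => (φ (f ↑x)).comp F)
    (by
      intro x y
      ext z
      simp [Submodule.coe_add, map_add, AddMonoidHom.add_apply, AddMonoidHom.comp_apply])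
  have hψ : ∀ x y : Dc, ψ x y = φ (f ↑x) (f ↑y) := fun x y => rfl
  -- injectivity
  have hψinj : Function.Injective ψ := by
    rw [injective_iff_map_eq_zero]
    intro x hx
    have hkillT : ∀ (k : ℕ) (τ : Dstar), s ^ k • τ = 0 → φ (f ↑x) τ = 0 := by
      intro k τ hτ
      obtain ⟨x', hx'⟩ := hsurjpow k x
      have hxc : (x : D) = s ^ k • (x' : D) := by rw [← hx']; rfl
      have hfx : f ↑x = s ^ k • f ↑x' := by rw [hxc, map_smul]
      rw [hfx, hφsk, hkill k τ hτ]
      exact map_zero _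
    have hall : ∀ w : Dstar, φ (f ↑x) w = 0 := by
      intro w
      obtain ⟨c, hc, k, hk⟩ := hdec w
      have h1 : φ (f ↑x) (w - f c) = 0 := hkillT k _ hk
      have h2 : φ (f ↑x) (f c) = 0 := by
        have h3 := DFunLike.congr_fun hx (⟨c, hc⟩ : Dc)
        simpa [hψ] using h3
      have h4 := map_sub (φ (f ↑x)) w (f c)
      rw [h1, h2, sub_zero] at h4
      exact h4.symm
    have hfx0 : f ↑x = 0 := by
      apply φ.injective
      rw [map_zero]
      ext w
      simpa using hall w
    exact Subtype.ext (hfinj ↑x x.2 hfx0)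
  -- surjectivity
  have hψsurj : Function.Surjective ψ := by
    intro g
    have hFinj : Function.Injective ((f.comp Dc.subtype).toAddMonoidHom.toIntLinearMap) := by
      intro u v huv
      have h1 : f (u : D) = f (v : D) := huv
      have h0 : f ((u : D) - (v : D)) = 0 := by rw [map_sub, h1, sub_self]
      have h2 := hfinj _ (sub_mem u.2 v.2) h0
      exact Subtype.ext (by rwa [sub_eq_zero] at h2)
    obtain ⟨H, hH⟩ := CharacterModule.dual_surjective_of_injective
      ((f.comp Dc.subtype).toAddMonoidHom.toIntLinearMap) hFinj g
    set z := φ.symm H with hz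
    obtain ⟨c, hc, k, hk⟩ := hdec z
    refine ⟨⟨c, hc⟩, ?_⟩
    ext y
    have hτ : φ (z - f c) (f ↑y) = 0 := by
      obtain ⟨y', hy'⟩ := hsurjpow k y
      have hyc : (y : D) = s ^ k • (y' : D) := by rw [← hy']; rfl
      have hfy : f ↑y = s ^ k • f ↑y' := by rw [hyc, map_smul]
      rw [hfy, ← hφs'k, hkill k _ hk]
      simp
    have hφz : φ z = H := φ.apply_symm_apply H
    have hgy : H (f ↑y) = g y := DFunLike.congr_fun hH y
    show φ (f c) (f ↑y) = g y
    have h5 : φ (f c) (f ↑y) = φ z (f ↑y) - φ (z - f c) (f ↑y) := by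
      rw [map_sub, AddMonoidHom.sub_apply]; abel
    rw [h5, hτ, sub_zero, hφz]; exact hgy
  -- assemble the equivalence
  refine ⟨AddEquiv.ofBijective ψ ⟨hψinj, hψsurj⟩, ?_⟩
  intro x y
  show ψ ((T 1 : Λ) • x) y = ψ x ((T (-1) : Λ) • y)
  rw [hψ, hψ]
  have h1 : (↑((T 1 : Λ) • x) : D) = (T 1 : Λ) • (x : D) := rfl
  have h2 : (↑((T (-1) : Λ) • y) : D) = (T (-1) : Λ) • (y : D) := rfl
  rw [h1, h2, LinearMap.map_smul, LinearMap.map_smul, hφ]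
end
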